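/- Let n ≥ 3, let m ∈ ℝ with m ≠ 1, let U ⊆ ℝⁿ be a connected open set, and let a : U → (symmetric invertible n×n real matrices) be a smooth matrix field in Kundt form with data H, W_a, h_{ab}. Let Γ^k_{ij} be the Christoffel symbols of a and let b_i = δ^u_i. Then there exists a smooth function c : U → ℝ such that ∂_i b_j − Σ_k Γ^k_{ij} b_k = c (1−m) b_i b_j on U if and only if ∂_v W_a = 0 and ∂_v h_{ab} = 0 on U for all a, b ∈ {3,…,n}; and in that case c = −∂_v H / (2(1−m)). -/

import Mathlib

open Matrix
open scoped BigOperators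

noncomputable section

/-- Partial derivative of `f : ℝⁿ → ℝ` in the `i`-th coordinate direction at `p`. -/
def pd {n : ℕ} (i : Fin n) (f : (Fin n → ℝ) → ℝ) (p : Fin n → ℝ) : ℝ :=
  fderiv ℝ f p (Pi.single i 1)

/-- Christoffel symbols `Γ^k_{ij}` of a matrix field `a`. -/
def christoffel {n : ℕ} (a : (Fin n → ℝ) → Matrix (Fin n) (Fin n) ℝ)
    (k i j : Fin n) (p : Fin n → ℝ) : ℝ :=
  (1 / 2) * ∑ l, (a p)⁻¹ k l *
    (pd i (fun q => a q j l) p + pd j (fun q => a q i l) p - pd l (fun q => a q i j) p)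

/-- The coordinate index `u` (the first coordinate). -/
def uIdx {n : ℕ} (_hn : 3 ≤ n) : Fin n := ⟨0, by omega⟩

/-- The coordinate index `v` (the second coordinate). -/
def vIdx {n : ℕ} (_hn : 3 ≤ n) : Fin n := ⟨1, by omega⟩

/-- The embedding of the transverse indices `{3,…,n}` (zero-based: `{2,…,n-1}`). -/
def embIdx {n : ℕ} (i : Fin (n - 2)) : Fin n := ⟨(i : ℕ) + 2, by have := i.isLt; omega⟩

/-- A matrix is in Kundt form with data `H`, `W`, `h`. -/
def IsKundt {n : ℕ} (hn : 3 ≤ n) (M : Matrix (Fin n) (Fin n) ℝ)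
    (H : ℝ) (W : Fin n → ℝ) (h : Fin n → Fin n → ℝ) : Prop :=
  M (uIdx hn) (uIdx hn) = H ∧
  M (uIdx hn) (vIdx hn) = -1 ∧ M (vIdx hn) (uIdx hn) = -1 ∧ M (vIdx hn) (vIdx hn) = 0 ∧
  (∀ a : Fin n, 2 ≤ (a : ℕ) →
    M (uIdx hn) a = W a / 2 ∧ M a (uIdx hn) = W a / 2 ∧
    M (vIdx hn) a = 0 ∧ M a (vIdx hn) = 0) ∧
  (∀ a b : Fin n, 2 ≤ (a : ℕ) → 2 ≤ (b : ℕ) → M a b = h a b)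

/-- The affine Ricci tensor `R̄_{lk}` of a connection with coefficients `Γ^k_{ij}`. -/
def affineRicci {n : ℕ} (Γ : Fin n → Fin n → Fin n → (Fin n → ℝ) → ℝ)
    (l k : Fin n) (p : Fin n → ℝ) : ℝ :=
  (∑ i, pd i (Γ i k l) p) - pd k (fun q => ∑ i, Γ i i l q) p +
    ∑ i, ∑ m, (Γ i m i p * Γ m k l p - Γ i m k p * Γ m i l p)


section AuxLemmas

variable {n : ℕ}

lemma pd_const (i : Fin n) (c : ℝ) (p : Fin n → ℝ) : pd i (fun _ => c) p = 0 := by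
  simp [pd]

lemma pd_congrOn {U : Set (Fin n → ℝ)} (hU : IsOpen U) {p : Fin n → ℝ} (hp : p ∈ U)
    {f g : (Fin n → ℝ) → ℝ} (hfg : ∀ q ∈ U, f q = g q) (i : Fin n) :
    pd i f p = pd i g p := by
  unfold pd
  rw [Filter.EventuallyEq.fderiv_eq (Filter.eventuallyEq_of_mem (hU.mem_nhds hp) hfg)]

lemma idx_cases (hn : 3 ≤ n) (i : Fin n) :
    i = uIdx hn ∨ i = vIdx hn ∨ 2 ≤ (i : ℕ) := by
  by_cases h0 : (i : ℕ) = 0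
  · exact Or.inl (Fin.ext h0)
  by_cases h1 : (i : ℕ) = 1
  · exact Or.inr (Or.inl (Fin.ext h1))
  · exact Or.inr (Or.inr (by omega))

end AuxLemmas

theorem stmt6 {n : ℕ} (hn : 3 ≤ n) (m : ℝ) (hm : m ≠ 1)
    (U : Set (Fin n → ℝ)) (hU : IsOpen U) (hconn : IsConnected U)
    (a : (Fin n → ℝ) → Matrix (Fin n) (Fin n) ℝ)
    (ha_smooth : ∀ i j, ContDiffOn ℝ (⊤ : ℕ∞) (fun p => a p i j) U)
    (ha_symm : ∀ p ∈ U, (a p).IsSymm) (ha_inv : ∀ p ∈ U, IsUnit (a p).det)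
    (H : (Fin n → ℝ) → ℝ) (W : (Fin n → ℝ) → Fin n → ℝ)
    (h : (Fin n → ℝ) → Fin n → Fin n → ℝ)
    (hH : ContDiffOn ℝ (⊤ : ℕ∞) H U)
    (hW : ∀ i, ContDiffOn ℝ (⊤ : ℕ∞) (fun p => W p i) U)
    (hh : ∀ i j, ContDiffOn ℝ (⊤ : ℕ∞) (fun p => h p i j) U)
    (hKundt : ∀ p ∈ U, IsKundt hn (a p) (H p) (W p) (h p)) :
    ((∃ c : (Fin n → ℝ) → ℝ, ContDiffOn ℝ (⊤ : ℕ∞) c U ∧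
        ∀ p ∈ U, ∀ i j : Fin n,
          pd i (fun _ => if j = uIdx hn then (1 : ℝ) else 0) p
              - ∑ k, christoffel a k i j p * (if k = uIdx hn then (1 : ℝ) else 0)
            = c p * (1 - m) * ((if i = uIdx hn then (1 : ℝ) else 0) *
                (if j = uIdx hn then (1 : ℝ) else 0)))
      ↔ (∀ p ∈ U, ∀ α β : Fin n, 2 ≤ (α : ℕ) → 2 ≤ (β : ℕ) →
          pd (vIdx hn) (fun q => W q α) p = 0 ∧ pd (vIdx hn) (fun q => h q α β) p = 0))
    ∧ (∀ c : (Fin n → ℝ) → ℝ,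
        (∀ p ∈ U, ∀ i j : Fin n,
          pd i (fun _ => if j = uIdx hn then (1 : ℝ) else 0) p
              - ∑ k, christoffel a k i j p * (if k = uIdx hn then (1 : ℝ) else 0)
            = c p * (1 - m) * ((if i = uIdx hn then (1 : ℝ) else 0) *
                (if j = uIdx hn then (1 : ℝ) else 0))) →
        ∀ p ∈ U, c p = -(pd (vIdx hn) H p) / (2 * (1 - m))) := by

  have one_sub_m : (1 : ℝ) - m ≠ 0 := sub_ne_zero.mpr (Ne.symm hm)
  have huv : uIdx hn ≠ vIdx hn := by simp [uIdx, vIdx, Fin.ext_iff]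
  have hval_u : ((uIdx hn : Fin n) : ℕ) = 0 := rfl
  have hval_v : ((vIdx hn : Fin n) : ℕ) = 1 := rfl
  have hne_u : ∀ j : Fin n, 2 ≤ (j : ℕ) → j ≠ uIdx hn := by
    intro j hj e; rw [e, hval_u] at hj; omega
  have hne_v : ∀ j : Fin n, 2 ≤ (j : ℕ) → j ≠ vIdx hn := by
    intro j hj e; rw [e, hval_v] at hj; omega
  -- column v of a is locally constant
  have colv : ∀ p ∈ U, ∀ j, a p j (vIdx hn) = -(if j = uIdx hn then (1:ℝ) else 0) := by
    intro p hp j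
    obtain ⟨h1, h2, h3, h4, h5, h6⟩ := hKundt p hp
    rcases idx_cases hn j with rfl | rfl | hj
    · simpa using h2
    · simpa [huv.symm] using h4
    · simpa [hne_u j hj] using (h5 j hj).2.2.2
  have rowv : ∀ p ∈ U, ∀ j, a p (vIdx hn) j = -(if j = uIdx hn then (1:ℝ) else 0) := by
    intro p hp j
    obtain ⟨h1, h2, h3, h4, h5, h6⟩ := hKundt p hp
    rcases idx_cases hn j with rfl | rfl | hj
    · simpa using h3
    · simpa [huv.symm] using h4
    · simpa [hne_u j hj] using (h5 j hj).2.2.1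
  -- row u of the inverse
  have invrow : ∀ p ∈ U, ∀ l, (a p)⁻¹ (uIdx hn) l = -(if l = vIdx hn then (1:ℝ) else 0) := by
    intro p hp l
    have hdet := ha_inv p hp
    have hA1 : (a p)⁻¹ * a p = 1 := Matrix.nonsing_inv_mul _ hdet
    have hmul : a p *ᵥ Pi.single (vIdx hn) (-1 : ℝ) = Pi.single (uIdx hn) 1 := by
      funext k
      simp [Matrix.mulVec, dotProduct, Pi.single_apply, Finset.sum_ite_eq',
        colv p hp k]
    have h2 : (a p)⁻¹ *ᵥ Pi.single (uIdx hn) (1:ℝ) = Pi.single (vIdx hn) (-1:ℝ) := by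
      rw [← hmul, Matrix.mulVec_mulVec, hA1, Matrix.one_mulVec]
    have h3 : (a p)⁻¹ l (uIdx hn) = (Pi.single (vIdx hn) (-1:ℝ) : Fin n → ℝ) l := by
      have := congrFun h2 l
      simpa [Matrix.mulVec, dotProduct, Pi.single_apply, Finset.sum_ite_eq'] using this
    have hsymm : ((a p)⁻¹)ᵀ = (a p)⁻¹ := by
      rw [Matrix.transpose_nonsing_inv]
      exact congrArg Inv.inv (ha_symm p hp)
    have : (a p)⁻¹ (uIdx hn) l = (a p)⁻¹ l (uIdx hn) := by
      conv_lhs => rw [← hsymm]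
      exact Matrix.transpose_apply _ _ _
    rw [this, h3, Pi.single_apply]
    by_cases hl : l = vIdx hn <;> simp [hl]
  -- Christoffel symbols with upper index u
  have christu : ∀ p ∈ U, ∀ i j, christoffel a (uIdx hn) i j p
      = (1/2) * pd (vIdx hn) (fun q => a q i j) p := by
    intro p hp i j
    unfold christoffel
    have hsum : ∑ l, (a p)⁻¹ (uIdx hn) l *
        (pd i (fun q => a q j l) p + pd j (fun q => a q i l) p - pd l (fun q => a q i j) p)
      = -(pd i (fun q => a q j (vIdx hn)) p + pd j (fun q => a q i (vIdx hn)) p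
          - pd (vIdx hn) (fun q => a q i j) p) := by
      rw [Finset.sum_congr rfl (fun l _ => by rw [invrow p hp l])]
      simp [neg_mul, ite_mul, Finset.sum_ite_eq']
    rw [hsum]
    have e1 : pd i (fun q => a q j (vIdx hn)) p = 0 := by
      rw [pd_congrOn hU hp (fun q hq => colv q hq j) i, pd_const]
    have e2 : pd j (fun q => a q i (vIdx hn)) p = 0 := by
      rw [pd_congrOn hU hp (fun q hq => colv q hq i) j, pd_const]
    rw [e1, e2]; ring
  -- simplification of the Berwald equation LHS
  have key : ∀ p ∈ U, ∀ i j : Fin n,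
      pd i (fun _ => if j = uIdx hn then (1:ℝ) else 0) p
        - ∑ k, christoffel a k i j p * (if k = uIdx hn then (1:ℝ) else 0)
      = -((1/2) * pd (vIdx hn) (fun q => a q i j) p) := by
    intro p hp i j
    rw [pd_const]
    have hs : ∑ k, christoffel a k i j p * (if k = uIdx hn then (1:ℝ) else 0)
        = christoffel a (uIdx hn) i j p := by
      simp [mul_ite, mul_one, mul_zero, Finset.sum_ite_eq']
    rw [hs, christu p hp i j]; ring
  -- the v-derivatives of the entries of a
  have Duu : ∀ p ∈ U, pd (vIdx hn) (fun q => a q (uIdx hn) (uIdx hn)) p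
      = pd (vIdx hn) H p := by
    intro p hp
    exact pd_congrOn hU hp (fun q hq => (hKundt q hq).1) _
  have Dub : ∀ p ∈ U, ∀ β : Fin n, 2 ≤ (β:ℕ) →
      pd (vIdx hn) (fun q => a q (uIdx hn) β) p
        = (1/2) * pd (vIdx hn) (fun q => W q β) p := by
    intro p hp β hβ
    rw [pd_congrOn hU hp (fun q hq => ((hKundt q hq).2.2.2.2.1 β hβ).1) _]
    have hdiff : DifferentiableAt ℝ (fun q => W q β) p :=
      (((hW β).contDiffAt (hU.mem_nhds hp)).differentiableAt (by simp))
    have heq : (fun q => W q β / 2) = fun q => (1/2 : ℝ) * W q β := by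
      funext q; ring
    unfold pd
    rw [heq, fderiv_const_mul hdiff]
    simp
  have Dbu : ∀ p ∈ U, ∀ β : Fin n, 2 ≤ (β:ℕ) →
      pd (vIdx hn) (fun q => a q β (uIdx hn)) p
        = (1/2) * pd (vIdx hn) (fun q => W q β) p := by
    intro p hp β hβ
    rw [pd_congrOn hU hp (fun q hq => ((hKundt q hq).2.2.2.2.1 β hβ).2.1) _]
    have hdiff : DifferentiableAt ℝ (fun q => W q β) p :=
      (((hW β).contDiffAt (hU.mem_nhds hp)).differentiableAt (by simp))
    have heq : (fun q => W q β / 2) = fun q => (1/2 : ℝ) * W q β := by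
      funext q; ring
    unfold pd
    rw [heq, fderiv_const_mul hdiff]
    simp
  have Dhh : ∀ p ∈ U, ∀ α β : Fin n, 2 ≤ (α:ℕ) → 2 ≤ (β:ℕ) →
      pd (vIdx hn) (fun q => a q α β) p = pd (vIdx hn) (fun q => h q α β) p := by
    intro p hp α β hα hβ
    exact pd_congrOn hU hp (fun q hq => (hKundt q hq).2.2.2.2.2 α β hα hβ) _
  have Div : ∀ p ∈ U, ∀ i i' : Fin n, pd i' (fun q => a q i (vIdx hn)) p = 0 := by
    intro p hp i i'
    rw [pd_congrOn hU hp (fun q hq => colv q hq i) i', pd_const]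
  have Dvj : ∀ p ∈ U, ∀ j i' : Fin n, pd i' (fun q => a q (vIdx hn) j) p = 0 := by
    intro p hp j i'
    rw [pd_congrOn hU hp (fun q hq => rowv q hq j) i', pd_const]
  constructor
  · constructor
    · rintro ⟨c, hc, hceq⟩ p hp α β hα hβ
      constructor
      · have E := hceq p hp (uIdx hn) α
        rw [key p hp, Dub p hp α hα, if_pos rfl, if_neg (hne_u α hα)] at E
        linarith [E]
      · have E := hceq p hp α β
        rw [key p hp, Dhh p hp α β hα hβ, if_neg (hne_u α hα), if_neg (hne_u β hβ)] at E
        linarith [E]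
    · intro hvan
      refine ⟨fun p => -(pd (vIdx hn) H p) / (2 * (1 - m)), ?_, ?_⟩
      · have h1 : ContDiffOn ℝ (⊤:ℕ∞) (fun p => fderiv ℝ H p) U :=
          hH.fderiv_of_isOpen hU (by exact_mod_cast le_top)
        have h2 : ContDiffOn ℝ (⊤:ℕ∞) (fun p => pd (vIdx hn) H p) U := by
          unfold pd
          exact h1.clm_apply contDiffOn_const
        exact h2.neg.div_const _
      · intro p hp i j
        rw [key p hp]
        rcases idx_cases hn i with rfl | rfl | hi
        · rcases idx_cases hn j with rfl | rfl | hj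
          · rw [Duu p hp, if_pos rfl]
            field_simp
          · rw [Div p hp _ _, if_neg huv.symm]
            ring
          · rw [Dub p hp j hj, (hvan p hp j j hj hj).1, if_neg (hne_u j hj)]
            ring
        · rw [Dvj p hp _ _, if_neg huv.symm]
          ring
        · rcases idx_cases hn j with rfl | rfl | hj
          · rw [Dbu p hp i hi, (hvan p hp i i hi hi).1, if_neg (hne_u i hi)]
            ring
          · rw [Div p hp _ _, if_neg huv.symm]
            ring
          · rw [Dhh p hp i j hi hj, (hvan p hp i j hi hj).2, if_neg (hne_u i hi)]
            ring
  · intro c hceq p hp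
    have E := hceq p hp (uIdx hn) (uIdx hn)
    rw [key p hp, Duu p hp, if_pos rfl] at E
    field_simp
    linarith [E]


end
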